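/- Extra variables destroy safe-extension invariance (Example 2, second part): with FS = {f/1, g/1}, CS = {0/0, 1/0}, P = { f X → Y X } and P' = P ⊎ { g 0 → 1 } (a safe extension of (P, f 0) and of (P, f 1)), one has 1 ∈ ⟦f 0⟧^{P'} but 1 ∉ ⟦f 1⟧^{P'}; hence ⟦f 0⟧^{P'} ≠ ⟦f 1⟧^{P'} although ⟦f 0⟧^P = ⟦f 1⟧^P, so the safe-extension lemma and full abstraction fail in the presence of extra variables. -/

import Mathlib

/-- A signature: function symbols and constructor symbols, each with an arity. -/
structure Sig where
  FS : Type
  CS : Type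
  arityF : FS → ℕ
  arityC : CS → ℕ

/-- Applicative partial expressions over a signature.  Variables are natural
numbers and `bot` is the distinguished 0-ary constructor `⊥`. -/
inductive Exp (σ : Sig) : Type where
  | var : ℕ → Exp σ
  | fn : σ.FS → Exp σ
  | cn : σ.CS → Exp σ
  | bot : Exp σ
  | app : Exp σ → Exp σ → Exp σ

variable {σ : Sig}

/-- `applyList e [e1, …, en]` is the curried application `e e1 … en`. -/
def applyList (e : Exp σ) (es : List (Exp σ)) : Exp σ := es.foldl Exp.app e

/-- Partial patterns `Pat_⊥`. -/
inductive IsPPat : Exp σ → Prop where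
  | var (x : ℕ) : IsPPat (Exp.var x)
  | bot : IsPPat (Exp.bot : Exp σ)
  | capp (c : σ.CS) (ts : List (Exp σ)) (har : ts.length ≤ σ.arityC c)
      (hts : ∀ t ∈ ts, IsPPat t) : IsPPat (applyList (Exp.cn c) ts)
  | fapp (f : σ.FS) (ts : List (Exp σ)) (har : ts.length < σ.arityF f)
      (hts : ∀ t ∈ ts, IsPPat t) : IsPPat (applyList (Exp.fn f) ts)

/-- The constructor `⊥` does not occur in the expression. -/
def BotFree : Exp σ → Prop
  | .bot => False
  | .app a b => BotFree a ∧ BotFree b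
  | _ => True

/-- Total patterns `Pat`. -/
def IsPat (t : Exp σ) : Prop := IsPPat t ∧ BotFree t

/-- First-order patterns `FOPat`. -/
inductive IsFOPat : Exp σ → Prop where
  | var (x : ℕ) : IsFOPat (Exp.var x)
  | capp (c : σ.CS) (ts : List (Exp σ)) (har : ts.length = σ.arityC c)
      (hts : ∀ t ∈ ts, IsFOPat t) : IsFOPat (applyList (Exp.cn c) ts)

/-- The list of occurrences of variables in an expression. -/
def occVars : Exp σ → List ℕ
  | .var x => [x]
  | .app a b => occVars a ++ occVars b
  | _ => []

/-- Applying a substitution to an expression. -/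
def subst (θ : ℕ → Exp σ) : Exp σ → Exp σ
  | .var x => θ x
  | .fn f => .fn f
  | .cn c => .cn c
  | .bot => .bot
  | .app a b => .app (subst θ a) (subst θ b)

/-- Partial-pattern substitutions `PSubst_⊥`. -/
def PSub (θ : ℕ → Exp σ) : Prop := ∀ x, IsPPat (θ x)

/-- A program rule `f t1 … tn → r` (the left-hand side is `f` applied to `lhs`). -/
structure Rule (σ : Sig) where
  fn : σ.FS
  lhs : List (Exp σ)
  rhs : Exp σ

/-- Well-formedness of a rule: `f` is applied to as many arguments as its arity,
the arguments form a linear tuple of total patterns. -/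
def Rule.WF (r : Rule σ) : Prop :=
  r.lhs.length = σ.arityF r.fn ∧ (∀ t ∈ r.lhs, IsPat t) ∧
    (r.lhs.flatMap occVars).Nodup

/-- The rule has no extra variables: all variables of the right-hand side occur
in the left-hand side. -/
def Rule.NoExtra (r : Rule σ) : Prop :=
  ∀ x ∈ occVars r.rhs, x ∈ r.lhs.flatMap occVars

abbrev Program (σ : Sig) := Set (Rule σ)

/-- A program without extra variables, all whose rules are well formed. -/
def WFProg (P : Program σ) : Prop := ∀ r ∈ P, r.WF ∧ r.NoExtra

/-- `h ∈ Σ` (a function symbol, a constructor symbol, or `⊥`). -/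
def IsSymb : Exp σ → Prop
  | .fn _ => True
  | .cn _ => True
  | .bot => True
  | _ => False

/-- HOCRWL derivation trees for statements `e ⇒ t`, with rules
(B), (RR), (DC) and (OR). -/
inductive DTree (P : Program σ) : Exp σ → Exp σ → Type where
  | bot (e : Exp σ) : DTree P e Exp.bot
  | rr (x : ℕ) : DTree P (Exp.var x) (Exp.var x)
  | dc (h : Exp σ) (es ts : List (Exp σ)) (hsym : IsSymb h)
      (hlen : es.length = ts.length) (hpat : IsPPat (applyList h ts))
      (ds : ∀ p ∈ es.zip ts, DTree P p.1 p.2) :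
      DTree P (applyList h es) (applyList h ts)
  | opr (r : Rule σ) (hr : r ∈ P) (θ : ℕ → Exp σ) (hθ : PSub θ)
      (es as : List (Exp σ)) (t : Exp σ) (hlen : es.length = r.lhs.length)
      (ds : ∀ p ∈ es.zip (r.lhs.map (subst θ)), DTree P p.1 p.2)
      (d : DTree P (applyList (subst θ r.rhs) as) t) :
      DTree P (applyList (Exp.fn r.fn) (es ++ as)) t

/-- `P ⊢ e ⇒ t` is derivable in the HOCRWL proof calculus. -/
def Deriv (P : Program σ) (e t : Exp σ) : Prop := Nonempty (DTree P e t)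

/-- The HOCRWL denotation `⟦e⟧^P = { t ∈ Pat_⊥ | P ⊢ e ⇒ t }`. -/
def den (P : Program σ) (e : Exp σ) : Set (Exp σ) := {t | IsPPat t ∧ Deriv P e t}

/-- Observations: total patterns in the denotation. -/
def Obs (P : Program σ) (e : Exp σ) : Set (Exp σ) := {t | t ∈ den P e ∧ BotFree t}

/-- First-order observations: first-order patterns in the denotation. -/
def ObsFO (P : Program σ) (e : Exp σ) : Set (Exp σ) := {t | t ∈ den P e ∧ IsFOPat t}

/-- Contexts `C ::= [ ] | C e | e C`. -/
inductive Cntxt (σ : Sig) : Type where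
  | hole : Cntxt σ
  | appL : Cntxt σ → Exp σ → Cntxt σ
  | appR : Exp σ → Cntxt σ → Cntxt σ

/-- Filling the hole of a context with an expression. -/
def Cntxt.fill : Cntxt σ → Exp σ → Exp σ
  | .hole, e => e
  | .appL C e', e => .app (C.fill e) e'
  | .appR e' C, e => .app e' (C.fill e)

/-- Function symbols occurring in an expression. -/
def expFS : Exp σ → Set σ.FS
  | .fn f => {f}
  | .app a b => expFS a ∪ expFS b
  | _ => ∅

/-- Function symbols occurring in a rule. -/
def ruleFS (r : Rule σ) : Set σ.FS :=
  insert r.fn ((⋃ t ∈ r.lhs, expFS t) ∪ expFS r.rhs)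

/-- Function symbols occurring in a program. -/
def progFS (P : Program σ) : Set σ.FS := ⋃ r ∈ P, ruleFS r

/-- Function symbols defined by a program (roots of left-hand sides). -/
def defs (P : Program σ) : Set σ.FS := Rule.fn '' P

/-- `P'` is a safe extension of `(P, e)`: `P' = P ⊎ P''` where `P''` defines no
function symbol occurring in `P` or in `e`. -/
def SafeExt (P P' : Program σ) (e : Exp σ) : Prop :=
  ∃ P'' : Program σ, P' = P ∪ P'' ∧ Disjoint P P'' ∧
    Disjoint (defs P'') (expFS e ∪ progFS P)

/-- `e ∼ₙ e'` : `n`-extensional equivalence. -/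
def ExtEquiv (P : Program σ) (n : ℕ) (e e' : Exp σ) : Prop :=
  ∀ es : List (Exp σ), es.length = n →
    den P (applyList e es) = den P (applyList e' es)

/-- Function symbols of the Example 2 program: `f/1`, `g/1`. -/
inductive Ex2F where | f | g

/-- Constructor symbols of the Example 2 program: `0/0`, `1/0`. -/
inductive Ex2C where | c0 | c1

/-- The signature of the Example 2 program. -/
def ex2Sig : Sig where
  FS := Ex2F
  CS := Ex2C
  arityF := fun s => match s with | .f => 1 | .g => 1
  arityC := fun s => match s with | .c0 => 0 | .c1 => 0

/-- The Example 2 program `P = { f X → Y X }` (extra variable `Y`). -/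
def ex2Prog : Program ex2Sig :=
  {⟨.f, [.var 0], .app (.var 1) (.var 0)⟩}

/-- The safe extension `P' = P ⊎ { g 0 → 1 }`. -/
def ex2Prog' : Program ex2Sig :=
  ex2Prog ∪ {⟨.g, [.cn .c0], .cn .c1⟩}

section Ex2Proof
variable {σ : Sig}

lemma applyList_concat (h : Exp σ) (l : List (Exp σ)) (x : Exp σ) :
    applyList h (l ++ [x]) = .app (applyList h l) x := by
  simp [applyList]

lemma applyList_atom {h v : Exp σ} {es : List (Exp σ)}
    (hv : ∀ a b : Exp σ, v ≠ .app a b) (he : applyList h es = v) :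
    h = v ∧ es = [] := by
  induction es using List.reverseRecOn with
  | nil => exact ⟨he, rfl⟩
  | append_singleton l x _ =>
      rw [applyList_concat] at he
      exact absurd he.symm (hv _ _)

lemma applyList_app {h a b : Exp σ} {es : List (Exp σ)}
    (he : applyList h es = .app a b) :
    (es = [] ∧ h = .app a b) ∨ ∃ l, es = l ++ [b] ∧ applyList h l = a := by
  induction es using List.reverseRecOn with
  | nil => exact .inl ⟨rfl, he⟩
  | append_singleton l x _ =>
      rw [applyList_concat] at he
      injection he with h1 h2
      exact .inr ⟨l, by rw [h2], h1⟩

lemma ppat_cases {p : Exp ex2Sig} (hp : IsPPat p) :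
    (∃ x, p = .var x) ∨ p = .bot ∨ (∃ c, p = .cn c) ∨ (∃ g, p = .fn g) := by
  cases hp with
  | var x => exact .inl ⟨x, rfl⟩
  | bot => exact .inr (.inl rfl)
  | capp c ts har hts =>
      have hts0 : ts = [] := by
        cases ts with
        | nil => rfl
        | cons a l => cases c <;> simp [ex2Sig] at har
      subst hts0
      exact .inr (.inr (.inl ⟨c, rfl⟩))
  | fapp f ts har hts =>
      have hts0 : ts = [] := by
        cases ts with
        | nil => rfl
        | cons a l => cases f <;> simp [ex2Sig] at har
      subst hts0
      exact .inr (.inr (.inr ⟨f, rfl⟩))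

lemma ppat_not_app {p : Exp ex2Sig} (hp : IsPPat p) {a b : Exp ex2Sig}
    (he : p = .app a b) : False := by
  rcases ppat_cases hp with ⟨x, rfl⟩ | rfl | ⟨c, rfl⟩ | ⟨g, rfl⟩ <;> simp at he

end Ex2Proof
set_option linter.constructorNameAsVariable false

lemma head_atom_bot {P : Program ex2Sig} {e t : Exp ex2Sig} (d : DTree P e t)
    (a w : Exp ex2Sig) (he : e = .app a w)
    (ha : ∀ b c : Exp ex2Sig, a ≠ .app b c) (hf : ∀ g, a ≠ Exp.fn g) : t = .bot := by
  cases d with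
  | bot => rfl
  | rr x => simp at he
  | dc h es ts hsym hlen hpat ds =>
      rcases applyList_app he with ⟨hes, hh⟩ | ⟨l, hl, hal⟩
      · subst hh; simp [IsSymb] at hsym
      · obtain ⟨hha, hl0⟩ := applyList_atom ha hal
        subst hha
        subst hl0
        subst hl
        cases ts with
        | nil => simp at hlen
        | cons t1 ts' =>
          cases ts' with
          | cons t2 ts'' => simp at hlen
          | nil =>
            cases h with
            | var x => simp [IsSymb] at hsym
            | fn g => exact absurd rfl (hf g)
            | app b c => exact absurd rfl (ha b c)
            | bot => exact absurd (ppat_not_app hpat rfl) id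
            | cn c => exact absurd (ppat_not_app hpat rfl) id
  | opr r hr θ hθ es as t hlen ds d =>
      rcases applyList_app he with ⟨hes, hh⟩ | ⟨l, hl, hal⟩
      · simp at hh
      · obtain ⟨hha, -⟩ := applyList_atom ha hal
        exact absurd hha.symm (hf _)
set_option linter.unusedVariables false in
lemma main' {e t : Exp ex2Sig} (d : DTree ex2Prog' e t) :
    (e = .cn .c1 → t = .bot ∨ t = .cn .c1) ∧
    (e = .bot → t = .bot) ∧
    (∀ u, (u = .cn .c1 ∨ u = .bot) → e = .app (.fn .f) u → t ≠ .cn .c1) ∧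
    (∀ u, (u = .cn .c1 ∨ u = .bot) → e = .app (.fn .g) u → t ≠ .cn .c1) := by
  induction d with
  | bot e => refine ⟨fun _ => .inl rfl, fun _ => rfl, fun u _ _ => by simp, fun u _ _ => by simp⟩
  | rr x => exact ⟨fun h => by simp at h, fun h => by simp at h,
      fun u _ h => by simp at h, fun u _ h => by simp at h⟩
  | dc h es ts hsym hlen hpat ds ih =>
      refine ⟨?_, ?_, ?_, ?_⟩
      · intro he
        obtain ⟨hh, hes⟩ := applyList_atom (by simp) he
        subst hh; subst hes
        have hts : ts = [] := by simpa using hlen.symm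
        subst hts
        right; rfl
      · intro he
        obtain ⟨hh, hes⟩ := applyList_atom (by simp) he
        subst hh; subst hes
        have hts : ts = [] := by simpa using hlen.symm
        subst hts
        rfl
      · intro u hu he ht
        obtain ⟨hh, hts⟩ := applyList_atom (by simp) ht
        subst hh; subst hts
        have hes : es = [] := by simpa using hlen
        subst hes
        simp [applyList] at he
      · intro u hu he ht
        obtain ⟨hh, hts⟩ := applyList_atom (by simp) ht
        subst hh; subst hts
        have hes : es = [] := by simpa using hlen
        subst hes
        simp [applyList] at he
  | opr r hr θ hθ es as t hlen ds d ih_ds ih_d =>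
      simp only [ex2Prog', ex2Prog, Set.union_singleton, Set.mem_insert_iff,
        Set.mem_singleton_iff] at hr
      refine ⟨?_, ?_, ?_, ?_⟩
      · intro he
        obtain ⟨hh, -⟩ := applyList_atom (by simp) he
        simp at hh
      · intro he
        obtain ⟨hh, -⟩ := applyList_atom (by simp) he
        simp at hh
      · intro u hu he ht
        subst ht
        rcases applyList_app he with ⟨-, h2⟩ | ⟨l, hl, hal⟩
        · simp at h2
        · obtain ⟨hfn, hl0⟩ := applyList_atom (by simp) hal
          subst hl0
          simp only [List.nil_append] at hl
          injection hfn with hfn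
          rcases hr with rfl | rfl
          · -- g rule : wrong head
            simp at hfn
          · -- f rule
            cases es with
            | nil => simp at hlen
            | cons e1 es' =>
              cases es' with
              | cons e2 es'' => simp at hlen
              | nil =>
                simp only [List.cons_append, List.nil_append, List.cons.injEq] at hl
                obtain ⟨rfl, rfl⟩ := hl
                have hQ := ih_ds (e1, subst θ (.var 0)) (by simp)
                have hθ0 : θ 0 = .cn .c1 ∨ θ 0 = .bot := by
                  rcases hu with rfl | rfl
                  · exact (hQ.1 rfl).symm
                  · exact .inr (hQ.2.1 rfl)
                have hrw : applyList (subst θ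
                      (({ fn := .f, lhs := [.var 0], rhs := .app (.var 1) (.var 0) } :
                        Rule ex2Sig).rhs)) ([] : List (Exp ex2Sig)) =
                      Exp.app (θ 1) (θ 0) := rfl
                rw [hrw] at ih_d d
                rcases ppat_cases (hθ 1) with ⟨x, hx⟩ | hb | ⟨c, hc⟩ | ⟨g, hg⟩
                · exact absurd (head_atom_bot d _ _ rfl (by simp [hx]) (by simp [hx]))
                    (by simp)
                · exact absurd (head_atom_bot d _ _ rfl (by simp [hb]) (by simp [hb]))
                    (by simp)
                · exact absurd (head_atom_bot d _ _ rfl (by simp [hc]) (by simp [hc]))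
                    (by simp)
                · cases g with
                  | f => exact ih_d.2.2.1 (θ 0) hθ0 (by rw [hg]) rfl
                  | g => exact ih_d.2.2.2 (θ 0) hθ0 (by rw [hg]) rfl
      · intro u hu he ht
        subst ht
        rcases applyList_app he with ⟨-, h2⟩ | ⟨l, hl, hal⟩
        · simp at h2
        · obtain ⟨hfn, hl0⟩ := applyList_atom (by simp) hal
          subst hl0
          simp only [List.nil_append] at hl
          injection hfn with hfn
          rcases hr with rfl | rfl
          · -- g rule
            cases es with
            | nil => simp at hlen
            | cons e1 es' =>
              cases es' with
              | cons e2 es'' => simp at hlen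
              | nil =>
                simp only [List.cons_append, List.nil_append, List.cons.injEq] at hl
                obtain ⟨rfl, rfl⟩ := hl
                have hQ := ih_ds (e1, subst θ (.cn .c0)) (by simp)
                rcases hu with rfl | rfl
                · rcases hQ.1 rfl with h | h <;> simp [subst] at h <;> cases h
                · have h := hQ.2.1 rfl
                  simp [subst] at h
          · -- f rule : wrong head
            simp at hfn
set_option linter.unusedVariables false

lemma ghead_bot {e t : Exp ex2Sig} (d : DTree ex2Prog e t) (u : Exp ex2Sig)
    (he : e = .app (.fn .g) u) : t = .bot := by
  cases d with
  | bot => rfl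
  | rr x => simp at he
  | dc h es ts hsym hlen hpat ds =>
      rcases applyList_app he with ⟨-, hh⟩ | ⟨l, hl, hal⟩
      · subst hh; simp [IsSymb] at hsym
      · obtain ⟨rfl, rfl⟩ := applyList_atom (by simp) hal
        subst hl
        cases ts with
        | nil => simp at hlen
        | cons t1 ts' =>
          cases ts' with
          | cons t2 ts'' => simp at hlen
          | nil => exact absurd (ppat_not_app hpat rfl) id
  | opr r hr θ hθ es as t hlen ds d =>
      simp only [ex2Prog, Set.mem_singleton_iff] at hr
      subst hr
      rcases applyList_app he with ⟨-, hh⟩ | ⟨l, hl, hal⟩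
      · simp at hh
      · obtain ⟨hfn, -⟩ := applyList_atom (by simp) hal
        simp at hfn
        cases hfn

lemma mainP {e t : Exp ex2Sig} (d : DTree ex2Prog e t) :
    ∀ u, e = .app (.fn .f) u → t = .bot := by
  induction d with
  | bot e => exact fun u h => rfl
  | rr x => intro u h; simp at h
  | dc h es ts hsym hlen hpat ds ih =>
      intro u he
      rcases applyList_app he with ⟨-, hh⟩ | ⟨l, hl, hal⟩
      · subst hh; simp [IsSymb] at hsym
      · obtain ⟨rfl, rfl⟩ := applyList_atom (by simp) hal
        subst hl
        cases ts with
        | nil => simp at hlen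
        | cons t1 ts' =>
          cases ts' with
          | cons t2 ts'' => simp at hlen
          | nil => exact absurd (ppat_not_app hpat rfl) id
  | opr r hr θ hθ es as t hlen ds d ih_ds ih_d =>
      intro u he
      simp only [ex2Prog, Set.mem_singleton_iff] at hr
      subst hr
      rcases applyList_app he with ⟨-, hh⟩ | ⟨l, hl, hal⟩
      · simp at hh
      · obtain ⟨-, rfl⟩ := applyList_atom (by simp) hal
        simp only [List.nil_append] at hl
        cases es with
        | nil => simp at hlen
        | cons e1 es' =>
          cases es' with
          | cons e2 es'' => simp at hlen
          | nil =>
            simp only [List.cons_append, List.nil_append, List.cons.injEq] at hl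
            obtain ⟨rfl, rfl⟩ := hl
            have hrw : applyList (subst θ
                  (({ fn := .f, lhs := [.var 0], rhs := .app (.var 1) (.var 0) } :
                    Rule ex2Sig).rhs)) ([] : List (Exp ex2Sig)) =
                  Exp.app (θ 1) (θ 0) := rfl
            rw [hrw] at ih_d d
            rcases ppat_cases (hθ 1) with ⟨x, hx⟩ | hb | ⟨c, hc⟩ | ⟨g, hg⟩
            · exact head_atom_bot d _ _ rfl (by simp [hx]) (by simp [hx])
            · exact head_atom_bot d _ _ rfl (by simp [hb]) (by simp [hb])
            · exact head_atom_bot d _ _ rfl (by simp [hc]) (by simp [hc])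
            · cases g with
              | f => exact ih_d (θ 0) (by rw [hg])
              | g => exact ghead_bot d (θ 0) (by rw [hg])

lemma denP_eq : den ex2Prog (.app (.fn .f) (.cn .c0)) =
    den ex2Prog (.app (.fn .f) (.cn .c1)) := by
  have h : ∀ u : Exp ex2Sig, den ex2Prog (.app (.fn .f) u) = {Exp.bot} := by
    intro u; ext t
    simp only [den, Set.mem_setOf_eq, Set.mem_singleton_iff, Deriv]
    constructor
    · rintro ⟨hp, ⟨d⟩⟩; exact mainP d u rfl
    · rintro rfl; exact ⟨IsPPat.bot, ⟨DTree.bot _⟩⟩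
  rw [h, h]
lemma ppat_cn (c : Ex2C) : IsPPat (σ := ex2Sig) (Exp.cn c) := by
  have h := IsPPat.capp (σ := ex2Sig) c [] (by cases c <;> simp [ex2Sig]) (by simp)
  simpa [applyList] using h

lemma ppat_fn (f : Ex2F) : IsPPat (σ := ex2Sig) (Exp.fn f) := by
  have h := IsPPat.fapp (σ := ex2Sig) f [] (by cases f <;> simp [ex2Sig]) (by simp)
  simpa [applyList] using h

def θpos : ℕ → Exp ex2Sig := fun n =>
  match n with | 0 => .cn .c0 | 1 => .fn .g | _ => .bot

lemma θpos_psub : PSub θpos := by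
  intro x
  match x with
  | 0 => exact ppat_cn Ex2C.c0
  | 1 => exact ppat_fn Ex2F.g
  | (n+2) => exact IsPPat.bot

def dtree_cn (c : Ex2C) : DTree ex2Prog' (.cn c) (.cn c) := by
  have h := DTree.dc (P := ex2Prog') (.cn c) [] [] trivial rfl
    (ppat_cn c) (fun p hp => absurd hp (by simp))
  simpa [applyList] using h

def dtree_g : DTree ex2Prog' (.app (.fn .g) (.cn .c0)) (.cn .c1) := by
  refine DTree.opr (P := ex2Prog') ⟨Ex2F.g, [Exp.cn Ex2C.c0], Exp.cn Ex2C.c1⟩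
    (by simp [ex2Prog'])
    (fun _ => .bot) (fun _ => IsPPat.bot) [.cn .c0] [] (.cn .c1) rfl ?_ ?_
  · intro p hp
    have hp' : p = (Exp.cn Ex2C.c0, Exp.cn Ex2C.c0) := by simpa [subst] using hp
    subst hp'
    exact dtree_cn Ex2C.c0
  · exact dtree_cn Ex2C.c1

def dtree_f : DTree ex2Prog' (.app (.fn .f) (.cn .c0)) (.cn .c1) := by
  refine DTree.opr (P := ex2Prog') ⟨Ex2F.f, [Exp.var 0], Exp.app (.var 1) (.var 0)⟩
    (by simp [ex2Prog', ex2Prog]) θpos θpos_psub [.cn .c0] [] (.cn .c1) rfl ?_ ?_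
  · intro p hp
    have hp' : p = (Exp.cn Ex2C.c0, Exp.cn Ex2C.c0) := by simpa [subst, θpos] using hp
    subst hp'
    exact dtree_cn Ex2C.c0
  · exact dtree_g

lemma pos_mem : Exp.cn Ex2C.c1 ∈ den ex2Prog' (.app (.fn .f) (.cn .c0)) :=
  ⟨ppat_cn Ex2C.c1, ⟨dtree_f⟩⟩

lemma neg_mem : Exp.cn Ex2C.c1 ∉ den ex2Prog' (.app (.fn .f) (.cn .c1)) := by
  rintro ⟨hp, ⟨d⟩⟩
  exact (main' d).2.2.1 (.cn .c1) (.inl rfl) rfl rfl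

lemma safe_ext (u : Ex2C) :
    SafeExt ex2Prog ex2Prog' (.app (.fn .f) (.cn u)) := by
  refine ⟨({⟨Ex2F.g, [Exp.cn Ex2C.c0], Exp.cn Ex2C.c1⟩} : Program ex2Sig), ?_, ?_, ?_⟩
  · rfl
  · simp only [ex2Prog, Set.disjoint_singleton]
    intro h
    exact Ex2F.noConfusion (congrArg Rule.fn h)
  · simp [defs, Set.image_singleton, Set.disjoint_singleton_left, expFS, progFS,
      ruleFS, ex2Prog]
    constructor <;> rw [Set.disjoint_left] <;> intro a ha hb <;>
      cases ha <;> rcases hb with hb | hb <;> cases hb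
/-- **Example 2, second part**: `P' = P ⊎ { g 0 → 1 }` is a safe extension of
`(P, f 0)` and of `(P, f 1)`, and `1 ∈ ⟦f 0⟧^{P'}` but `1 ∉ ⟦f 1⟧^{P'}`; hence
`⟦f 0⟧^{P'} ≠ ⟦f 1⟧^{P'}` although `⟦f 0⟧^P = ⟦f 1⟧^P`: the safe-extension
lemma and full abstraction fail in the presence of extra variables. -/
theorem ex2_safeExt_fails :
    SafeExt ex2Prog ex2Prog' (.app (.fn .f) (.cn .c0)) ∧
    SafeExt ex2Prog ex2Prog' (.app (.fn .f) (.cn .c1)) ∧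
    (Exp.cn Ex2C.c1 ∈ den ex2Prog' (.app (.fn .f) (.cn .c0))) ∧
    (Exp.cn Ex2C.c1 ∉ den ex2Prog' (.app (.fn .f) (.cn .c1))) ∧
    den ex2Prog' (.app (.fn .f) (.cn .c0)) ≠
      den ex2Prog' (.app (.fn .f) (.cn .c1)) ∧
    den ex2Prog (.app (.fn .f) (.cn .c0)) =
      den ex2Prog (.app (.fn .f) (.cn .c1)) := by
  refine ⟨safe_ext Ex2C.c0, safe_ext Ex2C.c1, pos_mem, neg_mem, ?_, denP_eq⟩
  intro h
  exact neg_mem (h ▸ pos_mem)
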